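/- Let X = (X₁, X₂) be a centered bivariate Gaussian vector with unit variances and correlation ρ ∈ (−1, 1). Define η^{(1)}(x) = (ρ/(1+ρ²))(x² − 1), η^{(2)}(x) = (ρ/(1+ρ²))(x² − 1), and η^{(1,2)}(x,z) = ρ(1−ρ²)/(1+ρ²) − (ρ/(1+ρ²))(x² + z²) + x·z, and η^{(∅)} = ρ. Then X₁·X₂ = η^{(∅)} + η^{(1)}(X₁) + η^{(2)}(X₂) + η^{(1,2)}(X₁, X₂) almost surely, and E[η^{(1,2)}(X₁,X₂) | X₁] = 0, E[η^{(1,2)}(X₁,X₂) | X₂] = 0, E[η^{(1)}(X₁)] = E[η^{(2)}(X₂)] = 0. -/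

import Mathlib

open MeasureTheory ProbabilityTheory

open MeasureTheory ProbabilityTheory Real
open scoped ENNReal NNReal

namespace Stmt9Aux


lemma pdf_eq : gaussianPDFReal 0 1 = fun x => (√(2*π))⁻¹ * rexp (-(1/2) * x^2) := by
  funext x
  simp only [gaussianPDFReal, NNReal.coe_one, mul_one, sub_zero]
  ring_nf

lemma pdf_nonneg (x : ℝ) : 0 ≤ gaussianPDFReal 0 1 x := gaussianPDFReal_nonneg 0 1 x

lemma gauss_eq : gaussianReal 0 1
    = volume.withDensity (fun x => ((gaussianPDFReal 0 1 x).toNNReal : ℝ≥0∞)) := by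
  rw [gaussianReal_of_var_ne_zero 0 one_ne_zero]
  rfl

lemma meas_pdfnn : Measurable (fun x => (gaussianPDFReal 0 1 x).toNNReal) :=
  (measurable_gaussianPDFReal 0 1).real_toNNReal

lemma integral_gauss (f : ℝ → ℝ) :
    ∫ x, f x ∂(gaussianReal 0 1) = ∫ x, gaussianPDFReal 0 1 x * f x := by
  rw [gauss_eq, integral_withDensity_eq_integral_smul meas_pdfnn]
  congr 1
  funext x
  simp [NNReal.smul_def, Real.coe_toNNReal _ (pdf_nonneg x)]

lemma integrable_gauss_iff (f : ℝ → ℝ) :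
    Integrable f (gaussianReal 0 1) ↔ Integrable (fun x => gaussianPDFReal 0 1 x * f x) volume := by
  rw [gauss_eq, integrable_withDensity_iff_integrable_smul meas_pdfnn]
  constructor <;> intro h <;> refine h.congr (Filter.Eventually.of_forall fun x => ?_) <;>
    simp [NNReal.smul_def, Real.coe_toNNReal _ (pdf_nonneg x)]



lemma int_vol_id : Integrable (fun x : ℝ => x * rexp (-(1/2) * x^2)) := by
  have := integrable_rpow_mul_exp_neg_mul_sq (b := 1/2) (by norm_num) (s := 1) (by norm_num)
  simpa using this

lemma int_vol_sq : Integrable (fun x : ℝ => x^2 * rexp (-(1/2) * x^2)) := by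
  have := integrable_rpow_mul_exp_neg_mul_sq (b := 1/2) (by norm_num) (s := 2) (by norm_num)
  have h2 : ∀ x : ℝ, x ^ (2:ℝ) = x ^ 2 := fun x => by
    rw [show ((2:ℝ) = ((2:ℕ):ℝ)) by norm_num, Real.rpow_natCast]
  simpa [h2] using this

lemma integral_id_exp : ∫ x : ℝ, x * rexp (-(1/2) * x^2) = 0 := by
  have h := integral_neg_eq_self (fun x : ℝ => x * rexp (-(1/2) * x^2)) (volume : Measure ℝ)
  have h2 : ∀ x : ℝ, (-x) * rexp (-(1/2) * (-x)^2) = -(x * rexp (-(1/2) * x^2)) := by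
    intro x; rw [neg_sq]; ring
  rw [show (fun x : ℝ => (fun y : ℝ => y * rexp (-(1/2) * y^2)) (-x))
      = fun x : ℝ => -(x * rexp (-(1/2) * x^2)) from funext h2] at h
  rw [integral_neg] at h
  linarith

lemma integral_sq_exp_Ioi :
    ∫ x in Set.Ioi (0:ℝ), x^2 * rexp (-(1/2) * x^2) = √(2*π)/2 := by
  have h := integral_rpow_mul_exp_neg_mul_rpow (p := 2) (q := 2) (b := 1/2)
    (by norm_num) (by norm_num) (by norm_num)
  have h2 : ∀ x : ℝ, x ^ (2:ℝ) = x ^ 2 := fun x => by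
    rw [show ((2:ℝ) = ((2:ℕ):ℝ)) by norm_num, Real.rpow_natCast]
  simp only [h2] at h
  rw [h]
  have hG : Real.Gamma ((2+1)/2) = √π / 2 := by
    rw [show ((2+1)/2 : ℝ) = 1/2 + 1 by norm_num, Real.Gamma_add_one (by norm_num),
      Real.Gamma_one_half_eq]
    ring
  have hb : ((1:ℝ)/2) ^ (-((2:ℝ)+1)/2) = 2 * √2 := by
    rw [show ((1:ℝ)/2) = 2⁻¹ by norm_num, ← Real.rpow_neg_one (2:ℝ),
      ← Real.rpow_mul (by norm_num)]
    norm_num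
    rw [show ((3:ℝ)/2) = 1 + 1/2 by norm_num, Real.rpow_add (by norm_num),
      Real.rpow_one, ← Real.sqrt_eq_rpow]
  rw [hG, hb, Real.sqrt_mul (by norm_num)]
  ring

lemma integral_sq_exp : ∫ x : ℝ, x^2 * rexp (-(1/2) * x^2) = √(2*π) := by
  have hsplit := integral_add_compl (measurableSet_Iic (a := (0:ℝ))) int_vol_sq
  rw [Set.compl_Iic] at hsplit
  have hneg : (∫ x in Set.Iic (0:ℝ), x^2 * rexp (-(1/2) * x^2))
      = ∫ x in Set.Ioi (0:ℝ), x^2 * rexp (-(1/2) * x^2) := by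
    rw [show (0:ℝ) = -0 by norm_num, ← integral_comp_neg_Ioi]
    simp [neg_sq]
  rw [hneg, integral_sq_exp_Ioi] at hsplit
  linarith

lemma sqrt_two_pi_pos : 0 < √(2*π) := Real.sqrt_pos.2 (by positivity)

lemma integrable_id_gauss : Integrable (fun x : ℝ => x) (gaussianReal 0 1) := by
  rw [integrable_gauss_iff, pdf_eq]
  have := int_vol_id.const_mul (√(2*π))⁻¹
  exact this.congr (Filter.Eventually.of_forall fun x => by simp; ring)

lemma integrable_sq_gauss : Integrable (fun x : ℝ => x^2) (gaussianReal 0 1) := by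
  rw [integrable_gauss_iff, pdf_eq]
  have := int_vol_sq.const_mul (√(2*π))⁻¹
  exact this.congr (Filter.Eventually.of_forall fun x => by simp; ring)

lemma integral_id_gauss : ∫ x, x ∂(gaussianReal 0 1) = 0 := by
  rw [integral_gauss, pdf_eq]
  have h : ∀ x:ℝ, ((√(2*π))⁻¹ * rexp (-(1/2) * x^2)) * x
      = (√(2*π))⁻¹ * (x * rexp (-(1/2)*x^2)) := fun x => by ring
  simp only [h]
  rw [integral_const_mul, integral_id_exp, mul_zero]

lemma integral_sq_gauss : ∫ x, x^2 ∂(gaussianReal 0 1) = 1 := by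
  rw [integral_gauss, pdf_eq]
  have h : ∀ x:ℝ, ((√(2*π))⁻¹ * rexp (-(1/2) * x^2)) * x^2
      = (√(2*π))⁻¹ * (x^2 * rexp (-(1/2)*x^2)) := fun x => by ring
  simp only [h]
  rw [integral_const_mul, integral_sq_exp, inv_mul_cancel₀ (ne_of_gt sqrt_two_pi_pos)]


def rotFun (a b : ℝ) : ℝ × ℝ → ℝ × ℝ := fun p => (a * p.1 + b * p.2, b * p.1 - a * p.2)

lemma rotFun_measurable (a b : ℝ) : Measurable (rotFun a b) :=
  ((measurable_fst.const_mul a).add (measurable_snd.const_mul b)).prod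
    ((measurable_fst.const_mul b).sub (measurable_snd.const_mul a))

def rotLin (a b : ℝ) : ℝ × ℝ →ₗ[ℝ] ℝ × ℝ where
  toFun := rotFun a b
  map_add' p q := by simp only [rotFun, Prod.fst_add, Prod.snd_add, Prod.mk_add_mk, Prod.mk.injEq]
                     constructor <;> ring
  map_smul' c p := by simp only [rotFun, Prod.smul_fst, Prod.smul_snd, smul_eq_mul,
                        Prod.smul_mk, RingHom.id_apply, Prod.mk.injEq]
                      constructor <;> ring

lemma rotLin_det (a b : ℝ) : LinearMap.det (rotLin a b) = -(a^2+b^2) := by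
  rw [← LinearMap.det_toMatrix (Module.Basis.finTwoProd ℝ), Matrix.det_fin_two]
  simp [LinearMap.toMatrix_apply, rotLin, rotFun]
  ring

def rotEquiv (a b : ℝ) (h : a^2 + b^2 = 1) : ℝ × ℝ ≃ᵐ ℝ × ℝ where
  toFun := rotFun a b
  invFun := rotFun a b
  left_inv p := by
    apply Prod.ext <;> simp only [rotFun] <;> [linear_combination p.1 * h; linear_combination p.2 * h]
  right_inv p := by
    apply Prod.ext <;> simp only [rotFun] <;> [linear_combination p.1 * h; linear_combination p.2 * h]
  measurable_toFun := rotFun_measurable a b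
  measurable_invFun := rotFun_measurable a b

lemma map_rot_volume {a b : ℝ} (h : a^2 + b^2 = 1) :
    Measure.map (rotFun a b) (volume : Measure (ℝ × ℝ)) = volume := by
  have hdet : LinearMap.det (rotLin a b) ≠ 0 := by rw [rotLin_det, h]; norm_num
  have hmap := Measure.map_linearMap_addHaar_eq_smul_addHaar (μ := (volume : Measure (ℝ × ℝ))) hdet
  rw [rotLin_det, h] at hmap
  norm_num at hmap
  exact hmap

lemma gauss_prod :
    (gaussianReal 0 1).prod (gaussianReal 0 1)
      = (volume : Measure (ℝ × ℝ)).withDensity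
          (fun p => gaussianPDF 0 1 p.1 * gaussianPDF 0 1 p.2) := by
  refine (Measure.prod_eq (μ := gaussianReal 0 1) (ν := gaussianReal 0 1)
    (μν := (volume : Measure (ℝ × ℝ)).withDensity
      (fun p => gaussianPDF 0 1 p.1 * gaussianPDF 0 1 p.2)) fun s t hs ht => ?_)
  rw [Measure.volume_eq_prod, withDensity_apply _ (hs.prod ht), ← Measure.prod_restrict,
    lintegral_prod_mul ((measurable_gaussianPDF 0 1).aemeasurable)
      ((measurable_gaussianPDF 0 1).aemeasurable)]
  rw [gaussianReal_of_var_ne_zero 0 one_ne_zero, withDensity_apply _ hs, withDensity_apply _ ht]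

lemma map_withDensity_equiv (e : ℝ × ℝ ≃ᵐ ℝ × ℝ) (f : ℝ × ℝ → ℝ≥0∞) (hf : Measurable f)
    (μ : Measure (ℝ × ℝ)) :
    Measure.map e (μ.withDensity (fun p => f (e p))) = (Measure.map e μ).withDensity f := by
  ext s hs
  rw [Measure.map_apply e.measurable hs, withDensity_apply _ hs, withDensity_apply _ (e.measurable hs),
    setLIntegral_map hs hf e.measurable]

lemma pdf_rot {a b : ℝ} (h : a^2 + b^2 = 1) (p : ℝ × ℝ) :
    gaussianPDF 0 1 (rotFun a b p).1 * gaussianPDF 0 1 (rotFun a b p).2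
      = gaussianPDF 0 1 p.1 * gaussianPDF 0 1 p.2 := by
  have key : ∀ u v : ℝ, gaussianPDFReal 0 1 u * gaussianPDFReal 0 1 v
      = ((√(2*π))⁻¹)^2 * rexp (-(1/2) * (u^2 + v^2)) := by
    intro u v
    rw [pdf_eq]
    simp only
    rw [show (-(1/2) * (u^2+v^2) : ℝ) = (-(1/2)*u^2) + (-(1/2)*v^2) by ring, Real.exp_add]
    ring
  simp only [gaussianPDF, ← ENNReal.ofReal_mul (pdf_nonneg _), key]
  congr 3
  simp only [rotFun]
  linear_combination (-(1/2) * (p.1^2 + p.2^2)) * h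

lemma map_rot_gauss_prod {a b : ℝ} (h : a^2 + b^2 = 1) :
    Measure.map (rotFun a b) ((gaussianReal 0 1).prod (gaussianReal 0 1))
      = (gaussianReal 0 1).prod (gaussianReal 0 1) := by
  have hfm : Measurable (fun p : ℝ × ℝ => gaussianPDF 0 1 p.1 * gaussianPDF 0 1 p.2) :=
    ((measurable_gaussianPDF 0 1).comp measurable_fst).mul
      ((measurable_gaussianPDF 0 1).comp measurable_snd)
  have hmap := map_withDensity_equiv (rotEquiv a b h)
    (fun p => gaussianPDF 0 1 p.1 * gaussianPDF 0 1 p.2) hfm volume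
  have hcoe : ⇑(rotEquiv a b h) = rotFun a b := rfl
  rw [hcoe] at hmap
  rw [show (fun p : ℝ × ℝ => gaussianPDF 0 1 ((rotFun a b p)).1
        * gaussianPDF 0 1 ((rotFun a b p)).2)
      = (fun p : ℝ × ℝ => gaussianPDF 0 1 p.1 * gaussianPDF 0 1 p.2)
    from funext (pdf_rot h), map_rot_volume h] at hmap
  rw [gauss_prod]
  exact hmap





variable {Ω : Type*} [MeasurableSpace Ω] {P : Measure Ω}

lemma integrable_of_law (V : Ω → ℝ) (hV : Measurable V)
    (hlaw : Measure.map V P = gaussianReal 0 1) {g : ℝ → ℝ} (hg : Measurable g)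
    (hgi : Integrable g (gaussianReal 0 1)) : Integrable (fun ω => g (V ω)) P := by
  rw [← hlaw] at hgi
  exact (integrable_map_measure hg.aestronglyMeasurable hV.aemeasurable).1 hgi

lemma integral_of_law (V : Ω → ℝ) (hV : Measurable V)
    (hlaw : Measure.map V P = gaussianReal 0 1) {g : ℝ → ℝ} (hg : Measurable g) :
    ∫ ω, g (V ω) ∂P = ∫ x, g x ∂(gaussianReal 0 1) := by
  rw [← hlaw, integral_map hV.aemeasurable hg.aestronglyMeasurable]

lemma condexp_key [IsProbabilityMeasure P]
    (Y V : Ω → ℝ) (hY : Measurable Y) (hV : Measurable V)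
    (hlawY : Measure.map Y P = gaussianReal 0 1) (hlawV : Measure.map V P = gaussianReal 0 1)
    (hind : IndepFun Y V P) (a K : ℝ) :
    P[(fun ω => a * (Y ω * V ω) + K * (1 - V ω ^ 2)) | MeasurableSpace.comap Y inferInstance]
      =ᵐ[P] 0 := by
  have hm : MeasurableSpace.comap Y inferInstance ≤ ‹MeasurableSpace Ω› := hY.comap_le
  have hYm : Measurable[MeasurableSpace.comap Y inferInstance] Y := fun s hs => ⟨s, hs, rfl⟩
  have hVm : Measurable[MeasurableSpace.comap V inferInstance] V := fun s hs => ⟨s, hs, rfl⟩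
  have intY : Integrable Y P := integrable_of_law Y hY hlawY measurable_id integrable_id_gauss
  have intV : Integrable V P := integrable_of_law V hV hlawV measurable_id integrable_id_gauss
  have intV2 : Integrable (fun ω => V ω ^ 2) P :=
    integrable_of_law V hV hlawV (measurable_id.pow_const 2) integrable_sq_gauss
  have intYV : Integrable (Y * V) P := hind.integrable_mul intY intV
  have int1V : Integrable (fun ω => 1 - V ω ^ 2) P := (integrable_const 1).sub intV2
  have h1 : Integrable (fun ω => a * (Y ω * V ω)) P := intYV.const_mul a
  have h2 : Integrable (fun ω => K * (1 - V ω ^ 2)) P := int1V.const_mul K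
  -- decompose
  have hadd : P[(fun ω => a * (Y ω * V ω) + K * (1 - V ω ^ 2)) | MeasurableSpace.comap Y inferInstance]
      =ᵐ[P] P[(fun ω => a * (Y ω * V ω)) | MeasurableSpace.comap Y inferInstance] + P[(fun ω => K * (1 - V ω ^ 2)) | MeasurableSpace.comap Y inferInstance] :=
    condExp_add h1 h2 _
  have hsa : P[(fun ω => a * (Y ω * V ω)) | MeasurableSpace.comap Y inferInstance] =ᵐ[P] a • P[Y * V | MeasurableSpace.comap Y inferInstance] :=
    condExp_smul (μ := P) (m := MeasurableSpace.comap Y inferInstance) a (Y * V)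
  have hmul : P[Y * V | MeasurableSpace.comap Y inferInstance] =ᵐ[P] Y * P[V | MeasurableSpace.comap Y inferInstance] :=
    condExp_mul_of_stronglyMeasurable_left hYm.stronglyMeasurable intYV intV
  have hcondV : P[V | MeasurableSpace.comap Y inferInstance] =ᵐ[P] fun _ => ∫ ω, V ω ∂P :=
    condExp_indep_eq hV.comap_le hm hVm.stronglyMeasurable hind.symm
  have hintV : ∫ ω, V ω ∂P = 0 := by
    rw [integral_of_law V hV hlawV (g := fun x => x) measurable_id, integral_id_gauss]
  have hGm : Measurable[MeasurableSpace.comap V inferInstance] (fun ω => 1 - V ω ^ 2) :=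
    measurable_const.sub (hVm.pow_const 2)
  have hsk : P[(fun ω => K * (1 - V ω ^ 2)) | MeasurableSpace.comap Y inferInstance] =ᵐ[P] K • P[(fun ω => 1 - V ω ^ 2) | MeasurableSpace.comap Y inferInstance] :=
    condExp_smul (μ := P) (m := MeasurableSpace.comap Y inferInstance) K (fun ω => 1 - V ω ^ 2)
  have hcondG : P[(fun ω => 1 - V ω ^ 2) | MeasurableSpace.comap Y inferInstance] =ᵐ[P] fun _ => ∫ ω, (1 - V ω ^ 2) ∂P :=
    condExp_indep_eq hV.comap_le hm hGm.stronglyMeasurable hind.symm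
  have hv2 : ∫ ω, V ω ^ 2 ∂P = 1 := by
    rw [integral_of_law V hV hlawV (g := fun x => x ^ 2) (measurable_id.pow_const 2)]
    exact integral_sq_gauss
  have hintG : ∫ ω, (1 - V ω ^ 2) ∂P = 0 := by
    rw [integral_sub (integrable_const 1) intV2, integral_const, hv2]
    simp
  filter_upwards [hadd, hsa, hmul, hcondV, hsk, hcondG] with ω e1 e2 e3 e4 e5 e6
  simp only [Pi.add_apply, Pi.smul_apply, Pi.mul_apply, smul_eq_mul, Pi.zero_apply] at *
  rw [e1, e2, e3, e4, e5, e6, hintV, hintG]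
  ring


lemma alg1 (ρ s x z : ℝ) (hs2 : s^2 = 1-ρ^2) (hden : (1:ℝ)+ρ^2 ≠ 0) :
    ρ*(1-ρ^2)/(1+ρ^2) - (ρ/(1+ρ^2))*(x^2+(ρ*x+s*z)^2) + x*(ρ*x+s*z)
      = (s*(1-ρ^2)/(1+ρ^2))*(x*z) + (ρ*(1-ρ^2)/(1+ρ^2))*(1-z^2) := by
  field_simp
  linear_combination (-ρ * z^2) * hs2

lemma alg2 (ρ s x z : ℝ) (hs2 : s^2 = 1-ρ^2) (hden : (1:ℝ)+ρ^2 ≠ 0) :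
    ρ*(1-ρ^2)/(1+ρ^2) - (ρ/(1+ρ^2))*(x^2+(ρ*x+s*z)^2) + x*(ρ*x+s*z)
      = (s*(1-ρ^2)/(1+ρ^2))*((ρ*x+s*z)*(s*x-ρ*z)) + (ρ*(1-ρ^2)/(1+ρ^2))*(1-(s*x-ρ*z)^2) := by
  field_simp
  linear_combination (s*x*z*(ρ^2-1) - ρ^3*z^2) * hs2


lemma integral_eta (c : ℝ) : ∫ x, c * (x^2 - 1) ∂(gaussianReal 0 1) = 0 := by
  rw [integral_const_mul, integral_sub integrable_sq_gauss (integrable_const 1),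
    integral_sq_gauss, integral_const]
  simp

end Stmt9Aux

open Stmt9Aux

/-- Analytical Hoeffding decomposition of X₁·X₂ for a centered bivariate
Gaussian with unit variances and correlation ρ (represented as X₁ = Z₁,
X₂ = ρZ₁ + √(1−ρ²)Z₂ with Z₁, Z₂ independent standard Gaussians). -/
theorem stmt9 {Ω : Type*} [MeasurableSpace Ω] (P : Measure Ω) [IsProbabilityMeasure P]
    (ρ : ℝ) (hρ : ρ ∈ Set.Ioo (-1 : ℝ) 1)
    (Z₁ Z₂ : Ω → ℝ) (hZ₁ : Measurable Z₁) (hZ₂ : Measurable Z₂)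
    (hlaw₁ : Measure.map Z₁ P = gaussianReal 0 1)
    (hlaw₂ : Measure.map Z₂ P = gaussianReal 0 1)
    (hindep : IndepFun Z₁ Z₂ P)
    (X₁ X₂ : Ω → ℝ)
    (hX₁ : X₁ = Z₁)
    (hX₂ : X₂ = fun ω => ρ * Z₁ ω + Real.sqrt (1 - ρ ^ 2) * Z₂ ω)
    (η₁ η₂ : ℝ → ℝ) (η₁₂ : ℝ → ℝ → ℝ) (η₀ : ℝ)
    (hη₀ : η₀ = ρ)
    (hη₁ : η₁ = fun x => (ρ / (1 + ρ ^ 2)) * (x ^ 2 - 1))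
    (hη₂ : η₂ = fun x => (ρ / (1 + ρ ^ 2)) * (x ^ 2 - 1))
    (hη₁₂ : η₁₂ = fun x z =>
      ρ * (1 - ρ ^ 2) / (1 + ρ ^ 2) - (ρ / (1 + ρ ^ 2)) * (x ^ 2 + z ^ 2) + x * z) :
    (∀ᵐ ω ∂P, X₁ ω * X₂ ω = η₀ + η₁ (X₁ ω) + η₂ (X₂ ω) + η₁₂ (X₁ ω) (X₂ ω)) ∧
      P[(fun ω => η₁₂ (X₁ ω) (X₂ ω)) |
          MeasurableSpace.comap X₁ inferInstance] =ᵐ[P] 0 ∧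
      P[(fun ω => η₁₂ (X₁ ω) (X₂ ω)) |
          MeasurableSpace.comap X₂ inferInstance] =ᵐ[P] 0 ∧
      ∫ ω, η₁ (X₁ ω) ∂P = 0 ∧
      ∫ ω, η₂ (X₂ ω) ∂P = 0 := by

  obtain ⟨hρ1, hρ2⟩ := hρ
  have hρsq : ρ^2 < 1 := by nlinarith
  have hpos : (0:ℝ) < 1 - ρ^2 := by linarith
  have hs2 : (Real.sqrt (1 - ρ^2))^2 = 1 - ρ^2 := Real.sq_sqrt hpos.le
  set s : ℝ := Real.sqrt (1 - ρ^2) with hs_def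
  have hden : (1:ℝ) + ρ^2 ≠ 0 := by positivity
  have hrot : ρ^2 + s^2 = 1 := by rw [hs2]; ring
  have hX₂m : Measurable X₂ := by rw [hX₂]; exact (hZ₁.const_mul ρ).add (hZ₂.const_mul s)
  set W : Ω → ℝ := fun ω => s * Z₁ ω - ρ * Z₂ ω with hW_def
  have hWm : Measurable W := (hZ₁.const_mul s).sub (hZ₂.const_mul ρ)
  have hjoint : Measure.map (fun ω => (Z₁ ω, Z₂ ω)) P
      = (gaussianReal 0 1).prod (gaussianReal 0 1) := by
    rw [(indepFun_iff_map_prod_eq_prod_map_map hZ₁.aemeasurable hZ₂.aemeasurable).1 hindep,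
      hlaw₁, hlaw₂]
  have hpairrot : Measure.map (fun ω => (X₂ ω, W ω)) P
      = (gaussianReal 0 1).prod (gaussianReal 0 1) := by
    have hcomp : (fun ω => (X₂ ω, W ω)) = rotFun ρ s ∘ (fun ω => (Z₁ ω, Z₂ ω)) := by
      funext ω; simp only [hX₂, hW_def, rotFun, Function.comp_apply]
    rw [hcomp, ← Measure.map_map (rotFun_measurable ρ s) (hZ₁.prodMk hZ₂), hjoint,
      map_rot_gauss_prod hrot]
  have hlawX₂ : Measure.map X₂ P = gaussianReal 0 1 := by
    have hc : X₂ = Prod.fst ∘ (fun ω => (X₂ ω, W ω)) := rfl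
    rw [hc, ← Measure.map_map measurable_fst (hX₂m.prodMk hWm), hpairrot,
      Measure.map_fst_prod]
    simp
  have hlawW : Measure.map W P = gaussianReal 0 1 := by
    have hc : W = Prod.snd ∘ (fun ω => (X₂ ω, W ω)) := rfl
    rw [hc, ← Measure.map_map measurable_snd (hX₂m.prodMk hWm), hpairrot,
      Measure.map_snd_prod]
    simp
  have hindXW : IndepFun X₂ W P := by
    rw [indepFun_iff_map_prod_eq_prod_map_map hX₂m.aemeasurable hWm.aemeasurable,
      hpairrot, hlawX₂, hlawW]
  refine ⟨?_, ?_, ?_, ?_, ?_⟩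
  · refine Filter.Eventually.of_forall fun ω => ?_
    subst hη₀ hη₁ hη₂ hη₁₂
    simp only
    field_simp
    ring
  · have hfun : (fun ω => η₁₂ (X₁ ω) (X₂ ω))
        = fun ω => (s*(1-ρ^2)/(1+ρ^2)) * (Z₁ ω * Z₂ ω)
            + (ρ*(1-ρ^2)/(1+ρ^2)) * (1 - Z₂ ω ^ 2) := by
      funext ω
      simp only [hη₁₂, hX₁, hX₂]
      exact alg1 ρ s (Z₁ ω) (Z₂ ω) hs2 hden
    rw [hfun, hX₁]
    exact condexp_key Z₁ Z₂ hZ₁ hZ₂ hlaw₁ hlaw₂ hindep _ _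
  · have hfun : (fun ω => η₁₂ (X₁ ω) (X₂ ω))
        = fun ω => (s*(1-ρ^2)/(1+ρ^2)) * (X₂ ω * W ω)
            + (ρ*(1-ρ^2)/(1+ρ^2)) * (1 - W ω ^ 2) := by
      funext ω
      simp only [hη₁₂, hX₁, hX₂, hW_def]
      exact alg2 ρ s (Z₁ ω) (Z₂ ω) hs2 hden
    rw [hfun]
    exact condexp_key X₂ W hX₂m hWm hlawX₂ hlawW hindXW _ _
  · simp only [hη₁, hX₁]
    rw [show (∫ ω, (ρ/(1+ρ^2)) * ((Z₁ ω)^2 - 1) ∂P)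
        = ∫ x, (ρ/(1+ρ^2)) * (x^2-1) ∂(gaussianReal 0 1) from
      integral_of_law Z₁ hZ₁ hlaw₁ (g := fun x => (ρ/(1+ρ^2)) * (x^2-1))
        (((measurable_id.pow_const 2).sub_const 1).const_mul _)]
    exact integral_eta _
  · simp only [hη₂]
    have hX₂' : ∀ ω, (ρ / (1 + ρ ^ 2)) * ((X₂ ω) ^ 2 - 1)
        = (fun x => (ρ/(1+ρ^2)) * (x^2-1)) (X₂ ω) := fun ω => rfl
    rw [show (∫ ω, (ρ/(1+ρ^2)) * ((X₂ ω)^2 - 1) ∂P)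
        = ∫ x, (ρ/(1+ρ^2)) * (x^2-1) ∂(gaussianReal 0 1) from
      integral_of_law X₂ hX₂m hlawX₂ (g := fun x => (ρ/(1+ρ^2)) * (x^2-1))
        (((measurable_id.pow_const 2).sub_const 1).const_mul _)]
    exact integral_eta _
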